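/- arXiv:2404.02401 — 3 statements merged into one kernel-verified Lean document; each statement's English description precedes it below -/
import Mathlib

section
/- Let σ ∈ C([0,T]; ℝ^{d×d}) and suppose S ∈ C¹([0,T]; ℝ^{d×d}) solves S' = −S² − σᵀS − Sσ − σᵀσ with S(T) = 0. Then S(t)ᵀ = S(t) for all t ∈ [0,T], and the function χ = S + σ satisfies the integral identity σ(t) = χ(t) − ∫_t^T χ(u)ᵀ χ(u) du for all t ∈ [0,T]. -/
open MeasureTheory Matrix intervalIntegral

attribute [local instance] Matrix.normedAddCommGroup Matrix.normedSpace

private lemma mat_norm_mul_le {d : ℕ} (A B : Matrix (Fin d) (Fin d) ℝ) :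
    ‖A * B‖ ≤ d * ‖A‖ * ‖B‖ := by
  rw [Matrix.norm_le_iff (by positivity)]
  intro i j
  calc ‖(A * B) i j‖ = ‖∑ k, A i k * B k j‖ := by rw [Matrix.mul_apply]
    _ ≤ ∑ k, ‖A i k * B k j‖ := norm_sum_le _ _
    _ ≤ ∑ _k : Fin d, ‖A‖ * ‖B‖ := by
        refine Finset.sum_le_sum fun k _ => ?_
        rw [norm_mul]
        exact mul_le_mul (Matrix.norm_entry_le_entrywise_sup_norm A)
          (Matrix.norm_entry_le_entrywise_sup_norm B) (norm_nonneg _) (norm_nonneg _)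
    _ = d * ‖A‖ * ‖B‖ := by simp [mul_assoc]

set_option maxHeartbeats 1000000 in
/-- a solution `S` of the Riccati equation
`S' = −S² − σᵀS − Sσ − σᵀσ`, `S(T) = 0`, is symmetric, and `χ = S + σ`
satisfies `σ(t) = χ(t) − ∫ₜᵀ χ(u)ᵀχ(u) du`. -/
theorem stmt14 (T : ℝ) (hT : 0 < T) (d : ℕ)
    (σ : ℝ → Matrix (Fin d) (Fin d) ℝ)
    (hσ : ContinuousOn σ (Set.Icc 0 T))
    (S : ℝ → Matrix (Fin d) (Fin d) ℝ)
    (hS : ∀ t ∈ Set.Icc (0:ℝ) T,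
      HasDerivWithinAt S
        (-(S t * S t) - (σ t)ᵀ * S t - S t * σ t - (σ t)ᵀ * σ t)
        (Set.Icc (0:ℝ) T) t)
    (hST : S T = 0) :
    (∀ t ∈ Set.Icc (0:ℝ) T, (S t)ᵀ = S t) ∧
    (∀ t ∈ Set.Icc (0:ℝ) T,
      σ t = (S t + σ t) - ∫ u in t..T, (S u + σ u)ᵀ * (S u + σ u)) := by
  have hScont : ContinuousOn S (Set.Icc 0 T) :=
    fun t ht => (hS t ht).continuousWithinAt
  set χ : ℝ → Matrix (Fin d) (Fin d) ℝ := fun t => S t + σ t with hχ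
  have hχcont : ContinuousOn χ (Set.Icc 0 T) := hScont.add hσ
  -- bound on χ
  obtain ⟨C, hC⟩ := (isCompact_Icc).exists_bound_of_continuousOn hχcont
  set C' : ℝ := max C 0 with hC'
  have hC'0 : 0 ≤ C' := le_max_right _ _
  have hCb : ∀ t ∈ Set.Icc (0:ℝ) T, ‖χ t‖ ≤ C' :=
    fun t ht => le_trans (hC t ht) (le_max_left _ _)
  -- clamp
  set c : ℝ → ℝ := fun t => max 0 (min t T) with hc
  have hcmem : ∀ t, c t ∈ Set.Icc (0:ℝ) T := fun t =>
    ⟨le_max_left _ _, max_le (le_of_lt hT) (min_le_right _ _)⟩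
  have hceq : ∀ t ∈ Set.Icc (0:ℝ) T, c t = t := fun t ht => by
    simp [hc, min_eq_left ht.2, max_eq_right ht.1]
  -- the vector field for the difference D = Sᵀ - S
  set v : ℝ → Matrix (Fin d) (Fin d) ℝ → Matrix (Fin d) (Fin d) ℝ :=
    fun t D => -((χ (c t))ᵀ * D + D * χ (c t)) with hv
  set K : NNReal := ⟨2 * d * C', by positivity⟩ with hK
  have hlip : ∀ t, LipschitzOnWith K (v t) Set.univ := by
    intro t
    apply LipschitzWith.lipschitzOnWith
    apply LipschitzWith.of_dist_le_mul
    intro x y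
    have hb := hCb _ (hcmem t)
    rw [dist_eq_norm, dist_eq_norm]
    have : v t x - v t y = -((χ (c t))ᵀ * (x - y) + (x - y) * χ (c t)) := by
      simp only [hv]; noncomm_ring
    rw [this, norm_neg]
    calc ‖(χ (c t))ᵀ * (x - y) + (x - y) * χ (c t)‖
        ≤ ‖(χ (c t))ᵀ * (x - y)‖ + ‖(x - y) * χ (c t)‖ := norm_add_le _ _
      _ ≤ d * ‖(χ (c t))ᵀ‖ * ‖x - y‖ + d * ‖x - y‖ * ‖χ (c t)‖ :=
          add_le_add (mat_norm_mul_le _ _) (mat_norm_mul_le _ _)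
      _ ≤ d * C' * ‖x - y‖ + d * ‖x - y‖ * C' := by
          rw [Matrix.norm_transpose]
          refine add_le_add ?_ ?_
          · exact mul_le_mul_of_nonneg_right
              (mul_le_mul_of_nonneg_left hb (by positivity)) (norm_nonneg _)
          · exact mul_le_mul_of_nonneg_left hb (by positivity)
      _ = ↑K * ‖x - y‖ := by show _ = (2 * d * C' : ℝ) * ‖x - y‖; ring
  -- D := Sᵀ - S solves D' = v t D, D T = 0
  set D : ℝ → Matrix (Fin d) (Fin d) ℝ := fun t => (S t)ᵀ - S t with hD
  have hDcont : ContinuousOn D (Set.Icc 0 T) := by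
    apply ContinuousOn.sub _ hScont
    exact (continuous_id.matrix_transpose).comp_continuousOn hScont
  have hDderiv : ∀ t ∈ Set.Icc (0:ℝ) T,
      HasDerivWithinAt D (v t (D t)) (Set.Icc 0 T) t := by
    intro t ht
    have h1 := hS t ht
    have h2 : HasDerivWithinAt (fun u => (S u)ᵀ)
        (-(S t * S t) - (σ t)ᵀ * S t - S t * σ t - (σ t)ᵀ * σ t)ᵀ
        (Set.Icc 0 T) t := by
      have := ((LinearMap.toContinuousLinearMap
        (Matrix.transposeLinearEquiv (Fin d) (Fin d) ℝ ℝ).toLinearMap).hasFDerivAt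
        (x := S t)).comp_hasDerivWithinAt t h1
      exact this
    have h3 := h2.sub h1
    convert h3 using 1
    · rfl
    · rfl
    · rfl
    · rfl
    simp only [hv, hD, hχ, hceq t ht, transpose_sub, transpose_add, transpose_mul,
      transpose_transpose, transpose_neg]
    noncomm_ring
  have hzero : ∀ t, v t 0 = 0 := fun t => by simp [hv]
  have hsym : ∀ t ∈ Set.Icc (0:ℝ) T, (S t)ᵀ = S t := by
    have huniq : Set.EqOn D (fun _ => (0 : Matrix (Fin d) (Fin d) ℝ)) (Set.Icc 0 T) := by
      apply ODE_solution_unique_of_mem_Icc_left (v := v) (s := fun _ => Set.univ) (fun t _ => hlip t)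
        hDcont
      · intro t ht
        refine (hDderiv t ⟨le_of_lt ht.1, ht.2⟩).mono_of_mem_nhdsWithin ?_
        rw [mem_nhdsWithin]
        exact ⟨Set.Ioi 0, isOpen_Ioi, ht.1,
          fun x hx => ⟨le_of_lt hx.1, le_trans hx.2 ht.2⟩⟩
      · intro t _; trivial
      · exact continuousOn_const
      · intro t _
        rw [hzero t]
        exact hasDerivWithinAt_const _ _ _
      · intro t _; trivial
      · simp [hD, hST]
    intro t ht
    have := huniq ht
    simpa [hD, sub_eq_zero] using this
  refine ⟨hsym, ?_⟩
  intro t ht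
  -- FTC on [t, T]
  have hsub : Set.Icc t T ⊆ Set.Icc (0:ℝ) T :=
    fun x hx => ⟨le_trans ht.1 hx.1, hx.2⟩
  have hIoo : ∀ x ∈ Set.Ioo t T, HasDerivWithinAt S (-((χ x)ᵀ * χ x)) (Set.Ioi x) x := by
    intro x hx
    have hx' : x ∈ Set.Icc (0:ℝ) T := ⟨le_trans ht.1 (le_of_lt hx.1), le_of_lt hx.2⟩
    have hder : HasDerivAt S
        (-(S x * S x) - (σ x)ᵀ * S x - S x * σ x - (σ x)ᵀ * σ x) x :=
      (hS x hx').hasDerivAt (Icc_mem_nhds (lt_of_le_of_lt ht.1 hx.1) hx.2)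
    have heq : -(S x * S x) - (σ x)ᵀ * S x - S x * σ x - (σ x)ᵀ * σ x
        = -((χ x)ᵀ * χ x) := by
      simp only [hχ, transpose_add, hsym x hx']
      noncomm_ring
    exact (heq ▸ hder).hasDerivWithinAt
  have hint : @IntervalIntegrable _ PseudoMetricSpace.toUniformSpace.toTopologicalSpace _ (fun u => -((χ u)ᵀ * χ u)) volume t T := by
    apply ContinuousOn.intervalIntegrable
    rw [Set.uIcc_of_le ht.2]
    have hχ' : ContinuousOn χ (Set.Icc t T) := hχcont.mono hsub
    have hg : Continuous fun A : Matrix (Fin d) (Fin d) ℝ => -(Aᵀ * A) :=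
      ((continuous_id.matrix_transpose).matrix_mul continuous_id).neg
    exact hg.comp_continuousOn hχ'
  have hFTC := integral_eq_sub_of_hasDeriv_right_of_le ht.2
    (hScont.mono hsub) hIoo hint
  rw [hST] at hFTC
  have hkey : (∫ u in t..T, (χ u)ᵀ * χ u) = S t := by
    rw [intervalIntegral.integral_neg] at hFTC
    have := neg_eq_iff_eq_neg.mp hFTC
    rw [this]; simp
  simp only [hχ] at hkey
  rw [hkey]
  abel
end

section
/- Let σ ∈ C¹([0,T]; ℝ^{d×d}), σ_A = (σ − σᵀ)/2, and let A ∈ C²([0,T]; ℝ^{d×d}) solve A'' − 2σ_A A' − σ'A = 0 with A(T) = I_d, A'(T) = σ(T), and suppose A(t) is invertible for every t. Set χ = A'A^{-1} and S = χ − σ. Then χ solves χ' = −χ² + 2σ_Aχ + σ' with χ(T) = σ(T), and S solves the Riccati equation S' = −S² − σᵀS − Sσ − σᵀσ with S(T) = 0; moreover S is symmetric and χ satisfies χ' + χᵀχ = σ' with χ(T) = σ(T). -/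
open MeasureTheory Matrix intervalIntegral

attribute [local instance] Matrix.normedAddCommGroup Matrix.normedSpace

namespace Stmt15Aux

def MatL (d : ℕ) : Type := Matrix (Fin d) (Fin d) ℝ

noncomputable instance (d : ℕ) : NormedRing (MatL d) := Matrix.linftyOpNormedRing
noncomputable instance (d : ℕ) : NormedAlgebra ℝ (MatL d) := Matrix.linftyOpNormedAlgebra

instance (d : ℕ) : FiniteDimensional ℝ (MatL d) :=
  inferInstanceAs (FiniteDimensional ℝ (Matrix (Fin d) (Fin d) ℝ))

instance (d : ℕ) : CompleteSpace (MatL d) := FiniteDimensional.complete ℝ _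

noncomputable def eqvL (d : ℕ) : Matrix (Fin d) (Fin d) ℝ ≃L[ℝ] MatL d :=
  LinearEquiv.toContinuousLinearEquiv
    { toFun := fun M => M, invFun := fun M => M,
      map_add' := fun _ _ => rfl, map_smul' := fun _ _ => rfl,
      left_inv := fun _ => rfl, right_inv := fun _ => rfl }

@[simp] lemma eqvL_apply {d : ℕ} (M : Matrix (Fin d) (Fin d) ℝ) : eqvL d M = M := rfl
@[simp] lemma eqvL_symm_apply {d : ℕ} (M : MatL d) : (eqvL d).symm M = M := rfl

variable {d : ℕ} {s : Set ℝ} {x : ℝ}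

lemma transfer {F : ℝ → Matrix (Fin d) (Fin d) ℝ} {F' : Matrix (Fin d) (Fin d) ℝ} :
    @HasDerivWithinAt ℝ _ (MatL d) _ _ _ _ F F' s x ↔ HasDerivWithinAt F F' s x := by
  constructor
  · intro h
    have := ((eqvL d).symm.hasFDerivAt.comp_hasDerivWithinAt x h)
    exact this
  · intro h
    have := ((eqvL d).hasFDerivAt.comp_hasDerivWithinAt x h)
    exact this

end Stmt15Aux

namespace Stmt15Aux
variable {d : ℕ} {s : Set ℝ} {x : ℝ}

lemma hd_mul {F G : ℝ → Matrix (Fin d) (Fin d) ℝ} {F' G' : Matrix (Fin d) (Fin d) ℝ}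
    (hF : HasDerivWithinAt F F' s x) (hG : HasDerivWithinAt G G' s x) :
    HasDerivWithinAt (fun t => F t * G t) (F' * G x + F x * G') s x := by
  rw [← transfer] at hF hG ⊢
  exact hF.mul hG

lemma hd_transpose {F : ℝ → Matrix (Fin d) (Fin d) ℝ} {F' : Matrix (Fin d) (Fin d) ℝ}
    (h : HasDerivWithinAt F F' s x) :
    HasDerivWithinAt (fun t => (F t)ᵀ) F'ᵀ s x := by
  have := ((Matrix.transposeLinearEquiv (Fin d) (Fin d) ℝ
      ℝ).toContinuousLinearEquiv.hasFDerivAt.comp_hasDerivWithinAt x h)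
  exact this

def toL {d : ℕ} (M : Matrix (Fin d) (Fin d) ℝ) : MatL d := M

lemma hd_inv {F : ℝ → Matrix (Fin d) (Fin d) ℝ} {F' : Matrix (Fin d) (Fin d) ℝ}
    (h : HasDerivWithinAt F F' s x) (hux : IsUnit (F x)) :
    HasDerivWithinAt (fun t => (F t)⁻¹) (-((F x)⁻¹ * F' * (F x)⁻¹)) s x := by
  rw [← transfer] at h ⊢
  have hux' : IsUnit (toL (F x)) := hux
  have hfd := hasFDerivAt_ringInverse (𝕜 := ℝ) hux'.unit
  rw [hux'.unit_spec] at hfd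
  have h2 := hfd.comp_hasDerivWithinAt x h
  have h3 : HasDerivWithinAt (fun t => Ring.inverse (toL (F t)))
      (-(Ring.inverse (toL (F x)) * toL F' * Ring.inverse (toL (F x)))) s x := by
    convert h2 using 1
    iterate 2 rfl
    have hinvu : Ring.inverse (toL (F x)) = ↑hux'.unit⁻¹ := by
      conv_lhs => rw [← hux'.unit_spec]
      exact Ring.inverse_unit _
    simp [Function.comp]
    rw [hinvu]
    rfl
  exact (h3.congr (fun t _ => by exact Matrix.nonsing_inv_eq_ringInverse (F t))
      (by exact Matrix.nonsing_inv_eq_ringInverse (F x))).congr_deriv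
    (by rw [Matrix.nonsing_inv_eq_ringInverse]; rfl)

end Stmt15Aux


/-- with `A'' − 2σ_A A' − σ'A = 0`, `A(T) = I`, `A'(T) = σ(T)`,
`A` non-singular, the functions `χ = A'A⁻¹` and `S = χ − σ` solve
`χ' = −χ² + 2σ_Aχ + σ'` and the Riccati equation respectively; moreover `S`
is symmetric and `χ' + χᵀχ = σ'`. -/
theorem stmt15 (T : ℝ) (hT : 0 < T) (d : ℕ)
    (σ σd : ℝ → Matrix (Fin d) (Fin d) ℝ)
    (hσd : ∀ t ∈ Set.Icc (0:ℝ) T, HasDerivWithinAt σ (σd t) (Set.Icc (0:ℝ) T) t)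
    (hσdcont : ContinuousOn σd (Set.Icc 0 T))
    (A Ad : ℝ → Matrix (Fin d) (Fin d) ℝ)
    (hA : ∀ t ∈ Set.Icc (0:ℝ) T, HasDerivWithinAt A (Ad t) (Set.Icc (0:ℝ) T) t)
    (hAd : ∀ t ∈ Set.Icc (0:ℝ) T,
      HasDerivWithinAt Ad
        ((σ t - (σ t)ᵀ) * Ad t + σd t * A t)
        (Set.Icc (0:ℝ) T) t)
    (hAT : A T = 1) (hAdT : Ad T = σ T)
    (hinv : ∀ t ∈ Set.Icc (0:ℝ) T, IsUnit (A t))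
    (χ S : ℝ → Matrix (Fin d) (Fin d) ℝ)
    (hχdef : ∀ t, χ t = Ad t * (A t)⁻¹)
    (hSdef : ∀ t, S t = χ t - σ t) :
    (∀ t ∈ Set.Icc (0:ℝ) T,
      HasDerivWithinAt χ
        (-(χ t * χ t) + (σ t - (σ t)ᵀ) * χ t + σd t) (Set.Icc (0:ℝ) T) t) ∧
    χ T = σ T ∧
    (∀ t ∈ Set.Icc (0:ℝ) T,
      HasDerivWithinAt S
        (-(S t * S t) - (σ t)ᵀ * S t - S t * σ t - (σ t)ᵀ * σ t)
        (Set.Icc (0:ℝ) T) t) ∧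
    S T = 0 ∧
    (∀ t ∈ Set.Icc (0:ℝ) T, (S t)ᵀ = S t) ∧
    (∀ t ∈ Set.Icc (0:ℝ) T,
      HasDerivWithinAt χ (σd t - (χ t)ᵀ * χ t) (Set.Icc (0:ℝ) T) t) := by
  have hTmem : T ∈ Set.Icc (0:ℝ) T := ⟨le_of_lt hT, le_refl T⟩
  have hdet : ∀ t ∈ Set.Icc (0:ℝ) T, IsUnit (A t).det :=
    fun t ht => (Matrix.isUnit_iff_isUnit_det _).mp (hinv t ht)
  have hAAi : ∀ t ∈ Set.Icc (0:ℝ) T, A t * (A t)⁻¹ = 1 :=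
    fun t ht => Matrix.mul_nonsing_inv _ (hdet t ht)
  have hχfun : χ = fun u => Ad u * (A u)⁻¹ := funext hχdef
  -- Part 1
  have h1 : ∀ t ∈ Set.Icc (0:ℝ) T,
      HasDerivWithinAt χ
        (-(χ t * χ t) + (σ t - (σ t)ᵀ) * χ t + σd t) (Set.Icc (0:ℝ) T) t := by
    intro t ht
    have hmul := Stmt15Aux.hd_mul (hAd t ht) (Stmt15Aux.hd_inv (hA t ht) (hinv t ht))
    rw [← hχfun] at hmul
    convert hmul using 1
    simp only [hχdef, add_mul, mul_one, mul_neg, mul_assoc, hAAi t ht]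
    abel
  -- Part 2
  have h2 : χ T = σ T := by
    rw [hχdef, hAT, hAdT]
    simp
  -- Part 3
  have h3 : ∀ t ∈ Set.Icc (0:ℝ) T,
      HasDerivWithinAt S
        (-(S t * S t) - (σ t)ᵀ * S t - S t * σ t - (σ t)ᵀ * σ t)
        (Set.Icc (0:ℝ) T) t := by
    intro t ht
    have hsub := (h1 t ht).sub (hσd t ht)
    have hSfun : S = χ - σ := funext hSdef
    rw [← hSfun] at hsub
    convert hsub using 1
    iterate 3 rfl
    simp only [hSdef]
    noncomm_ring
  -- Part 4
  have h4 : S T = 0 := by rw [hSdef, h2, sub_self]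
  -- the invariant W
  set W : ℝ → Matrix (Fin d) (Fin d) ℝ :=
    fun u => (A u)ᵀ * Ad u - (Ad u)ᵀ * A u - (A u)ᵀ * ((σ u - (σ u)ᵀ) * A u) with hWdef
  have hW : ∀ t ∈ Set.Icc (0:ℝ) T, HasDerivWithinAt W 0 (Set.Icc (0:ℝ) T) t := by
    intro t ht
    have hE := (hσd t ht).sub (Stmt15Aux.hd_transpose (hσd t ht))
    have t1 := Stmt15Aux.hd_mul (Stmt15Aux.hd_transpose (hA t ht)) (hAd t ht)
    have t2 := Stmt15Aux.hd_mul (Stmt15Aux.hd_transpose (hAd t ht)) (hA t ht)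
    have t3 := Stmt15Aux.hd_mul (Stmt15Aux.hd_transpose (hA t ht))
      (Stmt15Aux.hd_mul hE (hA t ht))
    have ht123 := (t1.sub t2).sub t3
    convert ht123 using 1
    iterate 4 rfl
    simp only [Matrix.transpose_mul, Matrix.transpose_sub, Matrix.transpose_transpose,
      Matrix.transpose_add, Pi.sub_apply]
    noncomm_ring
  have hWT : W T = 0 := by
    simp [hWdef, hAT, hAdT]
  have hW0 : ∀ t ∈ Set.Icc (0:ℝ) T, W t = 0 := by
    intro t ht
    have hb := Convex.norm_image_sub_le_of_norm_hasDerivWithin_le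
      (C := 0) (f' := fun _ => (0 : Matrix (Fin d) (Fin d) ℝ)) hW
      (fun y _ => by simp) (convex_Icc 0 T) hTmem ht
    rw [hWT, sub_zero, zero_mul] at hb
    have : ‖W t‖ = 0 := le_antisymm hb (norm_nonneg _)
    rwa [norm_eq_zero] at this
  -- Part 5 : symmetry
  have h5 : ∀ t ∈ Set.Icc (0:ℝ) T, (S t)ᵀ = S t := by
    intro t ht
    have hWt : (A t)ᵀ * Ad t = (Ad t)ᵀ * A t + (A t)ᵀ * ((σ t - (σ t)ᵀ) * A t) := by
      have h0 : (A t)ᵀ * Ad t - (Ad t)ᵀ * A t - (A t)ᵀ * ((σ t - (σ t)ᵀ) * A t) = 0 :=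
        hW0 t ht
      rw [sub_sub, sub_eq_zero] at h0
      exact h0
    -- transpose it
    have hWt' : (Ad t)ᵀ * A t = (A t)ᵀ * Ad t + (A t)ᵀ * ((σ t)ᵀ - σ t) * A t := by
      have := congrArg Matrix.transpose hWt
      simp only [Matrix.transpose_mul, Matrix.transpose_add, Matrix.transpose_sub,
        Matrix.transpose_transpose] at this
      rw [this]
      try noncomm_ring
    have hAdtT : (Ad t)ᵀ = (A t)ᵀ * (Ad t * (A t)⁻¹ + ((σ t)ᵀ - σ t)) := by
      have := congrArg (fun M => M * (A t)⁻¹) hWt'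
      simp only [add_mul, mul_assoc, hAAi t ht, mul_one] at this
      rw [this]
      try rw [mul_add]
    have hAtinv : ((A t)ᵀ)⁻¹ * (A t)ᵀ = 1 :=
      Matrix.nonsing_inv_mul _ (by rw [Matrix.det_transpose]; exact hdet t ht)
    have key : (Ad t * (A t)⁻¹)ᵀ = Ad t * (A t)⁻¹ + ((σ t)ᵀ - σ t) := by
      rw [Matrix.transpose_mul, Matrix.transpose_nonsing_inv, hAdtT, ← mul_assoc,
        hAtinv, one_mul]
    rw [hSdef, hχdef, Matrix.transpose_sub, key]
    abel
  -- Part 6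
  have h6 : ∀ t ∈ Set.Icc (0:ℝ) T,
      HasDerivWithinAt χ (σd t - (χ t)ᵀ * χ t) (Set.Icc (0:ℝ) T) t := by
    intro t ht
    have hχT : (χ t)ᵀ = χ t - (σ t - (σ t)ᵀ) := by
      have := h5 t ht
      rw [hSdef, Matrix.transpose_sub] at this
      have h' := congrArg (fun M => M + (σ t)ᵀ) this
      simp only [sub_add_cancel] at h'
      rw [h']
      noncomm_ring
    have := h1 t ht
    convert this using 1
    rw [hχT]
    noncomm_ring
  exact ⟨h1, h2, h3, h4, h5, h6⟩
end

section
/- Let χ ∈ C([0,T]; ℝ^{d×d}) and α ∈ C¹([0,T]; ℝ^{d×d}) with α' = χα, α(T) = I_d, and α(t) invertible for all t. Define F_χ : C([0,T];ℝ^d) → C([0,T];ℝ^d) by (F_χ w)(t) = −∫₀^t χ(s) w(s) ds and F̃_χ by (F̃_χ w)(t) = −α(t) ∫₀^t (α^{-1})'(s) w(s) ds. Then (I + F_χ) ∘ (I + F̃_χ) = (I + F̃_χ) ∘ (I + F_χ) = I on C([0,T];ℝ^d) (restricted to continuous paths with w(0)=0), i.e., I + F̃_χ is the two-sided inverse of I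 + F_χ. -/
open MeasureTheory Matrix intervalIntegral

attribute [local instance] Matrix.normedAddCommGroup Matrix.normedSpace

/-- The transformation `F_χ`: `(F_χ w)(t) = −∫₀ᵗ χ(s) w(s) ds`. -/
noncomputable def Fchi {d : ℕ} (χ : ℝ → Matrix (Fin d) (Fin d) ℝ)
    (w : ℝ → Fin d → ℝ) : ℝ → Fin d → ℝ :=
  fun t => -∫ s in (0:ℝ)..t, (χ s) *ᵥ w s

/-- The transformation `F̃_χ`: `(F̃_χ w)(t) = −α(t) ∫₀ᵗ (α⁻¹)'(s) w(s) ds`,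
where `(α⁻¹)' = −α⁻¹χ` since `α' = χα`. -/
noncomputable def Ftilde {d : ℕ} (χ α : ℝ → Matrix (Fin d) (Fin d) ℝ)
    (w : ℝ → Fin d → ℝ) : ℝ → Fin d → ℝ :=
  fun t => -((α t) *ᵥ (∫ s in (0:ℝ)..t, (-((α s)⁻¹ * χ s)) *ᵥ w s))

section helpers

variable {d : ℕ}

/-- `mulVec` as a continuous bilinear map. -/
noncomputable def mulVecCLM (d : ℕ) :
    Matrix (Fin d) (Fin d) ℝ →L[ℝ] (Fin d → ℝ) →L[ℝ] (Fin d → ℝ) :=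
  LinearMap.toContinuousLinearMap
    { toFun := fun A => LinearMap.toContinuousLinearMap (Matrix.mulVecLin A)
      map_add' := by
        intro A B; ext v i
        simp [Matrix.add_mulVec]
      map_smul' := by
        intro c A; ext v i
        simp [Matrix.smul_mulVec] }

lemma mulVecCLM_apply (A : Matrix (Fin d) (Fin d) ℝ) (v : Fin d → ℝ) :
    mulVecCLM d A v = A *ᵥ v := rfl

/-- Product rule for `mulVec`. -/
lemma hasDerivWithinAt_mulVec {A : ℝ → Matrix (Fin d) (Fin d) ℝ}
    {v : ℝ → Fin d → ℝ} {A' : Matrix (Fin d) (Fin d) ℝ} {v' : Fin d → ℝ}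
    {s : Set ℝ} {t : ℝ} (hA : HasDerivWithinAt A A' s t)
    (hv : HasDerivWithinAt v v' s t) :
    HasDerivWithinAt (fun r => A r *ᵥ v r) (A' *ᵥ v t + A t *ᵥ v') s t := by
  have h1 : HasDerivWithinAt (fun r => mulVecCLM d (A r)) (mulVecCLM d A') s t :=
    (mulVecCLM d).hasFDerivAt.comp_hasDerivWithinAt t hA
  exact h1.clm_apply hv

/-- FTC-1 on `[0, T]`. -/
lemma ftc1 {E : Type*} [NormedAddCommGroup E] [NormedSpace ℝ E] [CompleteSpace E]
    {f : ℝ → E} {T : ℝ} (hf : ContinuousOn f (Set.Icc 0 T))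
    {t : ℝ} (ht : t ∈ Set.Icc (0:ℝ) T) :
    HasDerivWithinAt (fun r => ∫ s in (0:ℝ)..r, f s) (f t) (Set.Icc (0:ℝ) T) t := by
  haveI : Fact (t ∈ Set.Icc (0:ℝ) T) := ⟨ht⟩
  have hsub : Set.uIcc (0:ℝ) t ⊆ Set.Icc 0 T := by
    rw [Set.uIcc_of_le ht.1]
    exact Set.Icc_subset_Icc_right ht.2
  exact intervalIntegral.integral_hasDerivWithinAt_right
    ((hf.mono hsub).intervalIntegrable)
    (hf.stronglyMeasurableAtFilter_nhdsWithin measurableSet_Icc t)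
    (hf t ht)

/-- FTC-2 on `[0, t] ⊆ [0, T]`. -/
lemma ftc2 {E : Type*} [NormedAddCommGroup E] [NormedSpace ℝ E] [CompleteSpace E]
    {g g' : ℝ → E} {T : ℝ}
    (hg : ∀ r ∈ Set.Icc (0:ℝ) T, HasDerivWithinAt g (g' r) (Set.Icc (0:ℝ) T) r)
    (hg' : ContinuousOn g' (Set.Icc (0:ℝ) T))
    {t : ℝ} (ht : t ∈ Set.Icc (0:ℝ) T) :
    ∫ s in (0:ℝ)..t, g' s = g t - g 0 := by
  have hmem : Set.Icc (0:ℝ) t ⊆ Set.Icc 0 T := Set.Icc_subset_Icc_right ht.2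
  apply intervalIntegral.integral_eq_sub_of_hasDeriv_right_of_le ht.1
  · exact fun r hr => ((hg r (hmem hr)).continuousWithinAt).mono hmem
  · intro x hx
    have hxT : x ∈ Set.Ioo (0:ℝ) T := ⟨hx.1, lt_of_lt_of_le hx.2 ht.2⟩
    exact ((hg x (Set.Ioo_subset_Icc_self hxT)).hasDerivAt
      (Icc_mem_nhds hxT.1 hxT.2)).hasDerivWithinAt
  · refine (hg'.mono ?_).intervalIntegrable
    rw [Set.uIcc_of_le ht.1]
    exact hmem

/-- Derivative of the pointwise matrix inverse. -/
lemma hasDerivWithinAt_matrix_inv {α : ℝ → Matrix (Fin d) (Fin d) ℝ}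
    {A' : Matrix (Fin d) (Fin d) ℝ} {s : Set ℝ} {t : ℝ}
    (hd : HasDerivWithinAt α A' s t)
    (hc : ContinuousWithinAt (fun r => (α r)⁻¹) s t)
    (hu : ∀ r ∈ s, IsUnit (α r)) (ht : t ∈ s) :
    HasDerivWithinAt (fun r => (α r)⁻¹) (-((α t)⁻¹ * A' * (α t)⁻¹)) s t := by
  have hdt : IsUnit (α t).det := (Matrix.isUnit_iff_isUnit_det _).mp (hu t ht)
  apply hasDerivWithinAt_iff_tendsto_slope.mpr
  have hslope := hasDerivWithinAt_iff_tendsto_slope.mp hd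
  have hβ : Filter.Tendsto (fun r => (α r)⁻¹) (nhdsWithin t (s \ {t})) (nhds (α t)⁻¹) :=
    hc.mono_left (nhdsWithin_mono t Set.diff_subset)
  have key : Filter.Tendsto (fun r => (α r)⁻¹ * (-(slope α t r)) * (α t)⁻¹)
      (nhdsWithin t (s \ {t})) (nhds ((α t)⁻¹ * (-A') * (α t)⁻¹)) :=
    (hβ.mul hslope.neg).mul tendsto_const_nhds
  have hval : (α t)⁻¹ * -A' * (α t)⁻¹ = -((α t)⁻¹ * A' * (α t)⁻¹) := by
    simp [Matrix.neg_mul, Matrix.mul_neg]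
  rw [hval] at key
  refine key.congr' ?_
  filter_upwards [self_mem_nhdsWithin] with r hr
  have hdr : IsUnit (α r).det := (Matrix.isUnit_iff_isUnit_det _).mp (hu r hr.1)
  have key2 : (α r)⁻¹ * (α t - α r) * (α t)⁻¹ = (α r)⁻¹ - (α t)⁻¹ := by
    rw [Matrix.mul_sub, Matrix.sub_mul, mul_assoc,
      Matrix.mul_nonsing_inv _ hdt, Matrix.nonsing_inv_mul _ hdr, mul_one, one_mul]
  rw [slope_def_module, slope_def_module, ← smul_neg, neg_sub,
    Matrix.mul_smul, Matrix.smul_mul, key2]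

end helpers

/-- `I + F̃_χ` is a two-sided inverse of `I + F_χ` on continuous
paths starting at `0`. -/
theorem stmt17 (T : ℝ) (hT : 0 < T) (d : ℕ)
    (χ α : ℝ → Matrix (Fin d) (Fin d) ℝ)
    (hχ : ContinuousOn χ (Set.Icc 0 T))
    (hα : ∀ t ∈ Set.Icc (0:ℝ) T,
      HasDerivWithinAt α (χ t * α t) (Set.Icc (0:ℝ) T) t)
    (hαT : α T = 1)
    (hinv : ∀ t ∈ Set.Icc (0:ℝ) T, IsUnit (α t))
    (w : ℝ → Fin d → ℝ)
    (hw : ContinuousOn w (Set.Icc 0 T)) (hw0 : w 0 = 0) :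
    (∀ t ∈ Set.Icc (0:ℝ) T,
      (fun r => w r + Fchi χ w r) t
        + Ftilde χ α (fun r => w r + Fchi χ w r) t = w t) ∧
    (∀ t ∈ Set.Icc (0:ℝ) T,
      (fun r => w r + Ftilde χ α w r) t
        + Fchi χ (fun r => w r + Ftilde χ α w r) t = w t) := by
  have hdet : ∀ r ∈ Set.Icc (0:ℝ) T, IsUnit (α r).det :=
    fun r hr => (Matrix.isUnit_iff_isUnit_det _).mp (hinv r hr)
  have hαc : ContinuousOn α (Set.Icc (0:ℝ) T) :=
    fun r hr => (hα r hr).continuousWithinAt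
  -- continuity of the inverse
  have hβ : ContinuousOn (fun r => (α r)⁻¹) (Set.Icc (0:ℝ) T) := by
    intro r hr
    have h1 : ContinuousAt Inv.inv (α r) := by
      apply continuousAt_matrix_inv
      rw [Ring.inverse_eq_inv']
      exact continuousAt_inv₀ (hdet r hr).ne_zero
    exact h1.comp_continuousWithinAt (hαc r hr)
  -- derivative of the inverse
  have hβd : ∀ r ∈ Set.Icc (0:ℝ) T,
      HasDerivWithinAt (fun τ => (α τ)⁻¹) (-((α r)⁻¹ * χ r)) (Set.Icc (0:ℝ) T) r := by
    intro r hr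
    have h := hasDerivWithinAt_matrix_inv (hα r hr) (hβ r hr) hinv hr
    have hval : (α r)⁻¹ * (χ r * α r) * (α r)⁻¹ = (α r)⁻¹ * χ r := by
      rw [← mul_assoc, mul_assoc, Matrix.mul_nonsing_inv _ (hdet r hr), mul_one]
    rwa [hval] at h
  -- continuity of mulVec combinations
  have hmulVec : ∀ {M : ℝ → Matrix (Fin d) (Fin d) ℝ} {v : ℝ → Fin d → ℝ},
      ContinuousOn M (Set.Icc (0:ℝ) T) → ContinuousOn v (Set.Icc (0:ℝ) T) →
      ContinuousOn (fun s => M s *ᵥ v s) (Set.Icc (0:ℝ) T) := by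
    intro M v hM hv
    have hc : Continuous (fun p : Matrix (Fin d) (Fin d) ℝ × (Fin d → ℝ) => p.1 *ᵥ p.2) :=
      continuous_fst.matrix_mulVec continuous_snd
    exact hc.comp_continuousOn (hM.prodMk hv)
  constructor
  · -- direction 1
    intro t ht
    have hIint : ContinuousOn (fun s => χ s *ᵥ w s) (Set.Icc (0:ℝ) T) := hmulVec hχ hw
    have hIderiv : ∀ r ∈ Set.Icc (0:ℝ) T,
        HasDerivWithinAt (fun τ => ∫ s in (0:ℝ)..τ, χ s *ᵥ w s) (χ r *ᵥ w r)
          (Set.Icc (0:ℝ) T) r := fun r hr => ftc1 hIint hr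
    have hIcont : ContinuousOn (fun τ => ∫ s in (0:ℝ)..τ, χ s *ᵥ w s) (Set.Icc (0:ℝ) T) :=
      fun r hr => (hIderiv r hr).continuousWithinAt
    have hucont : ContinuousOn (fun r => w r + Fchi χ w r) (Set.Icc (0:ℝ) T) := by
      have : ContinuousOn (fun r => -(∫ s in (0:ℝ)..r, χ s *ᵥ w s)) (Set.Icc (0:ℝ) T) :=
        hIcont.neg
      exact hw.add this
    have hgderiv : ∀ r ∈ Set.Icc (0:ℝ) T,
        HasDerivWithinAt (fun τ => (α τ)⁻¹ *ᵥ ∫ s in (0:ℝ)..τ, χ s *ᵥ w s)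
          (((α r)⁻¹ * χ r) *ᵥ (w r + Fchi χ w r)) (Set.Icc (0:ℝ) T) r := by
      intro r hr
      have h := hasDerivWithinAt_mulVec (hβd r hr) (hIderiv r hr)
      have hval : (-((α r)⁻¹ * χ r)) *ᵥ (∫ s in (0:ℝ)..r, χ s *ᵥ w s)
          + (α r)⁻¹ *ᵥ (χ r *ᵥ w r)
          = ((α r)⁻¹ * χ r) *ᵥ (w r + Fchi χ w r) := by
        simp [Fchi, Matrix.neg_mulVec, Matrix.mulVec_add, Matrix.mulVec_neg,
          Matrix.mulVec_mulVec]
        abel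
      rwa [hval] at h
    have hginteg : ContinuousOn (fun r => ((α r)⁻¹ * χ r) *ᵥ (w r + Fchi χ w r))
        (Set.Icc (0:ℝ) T) := hmulVec (hβ.mul hχ) hucont
    have hg := ftc2 hgderiv hginteg ht
    simp only [intervalIntegral.integral_same, Matrix.mulVec_zero, sub_zero] at hg
    show (w t + Fchi χ w t) + Ftilde χ α (fun r => w r + Fchi χ w r) t = w t
    rw [Ftilde]
    simp only [Matrix.neg_mulVec, intervalIntegral.integral_neg]
    rw [hg, Matrix.mulVec_neg, Matrix.mulVec_mulVec,
      Matrix.mul_nonsing_inv _ (hdet t ht), Matrix.one_mulVec, neg_neg]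
    simp [Fchi]
  · -- direction 2
    intro t ht
    have hKint : ContinuousOn (fun s => ((α s)⁻¹ * χ s) *ᵥ w s) (Set.Icc (0:ℝ) T) :=
      hmulVec (hβ.mul hχ) hw
    have hKderiv : ∀ r ∈ Set.Icc (0:ℝ) T,
        HasDerivWithinAt (fun τ => ∫ s in (0:ℝ)..τ, ((α s)⁻¹ * χ s) *ᵥ w s)
          (((α r)⁻¹ * χ r) *ᵥ w r) (Set.Icc (0:ℝ) T) r := fun r hr => ftc1 hKint hr
    have hKcont : ContinuousOn (fun τ => ∫ s in (0:ℝ)..τ, ((α s)⁻¹ * χ s) *ᵥ w s)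
        (Set.Icc (0:ℝ) T) := fun r hr => (hKderiv r hr).continuousWithinAt
    -- Ftilde χ α w τ = α τ *ᵥ K τ
    have hFt : ∀ τ, Ftilde χ α w τ
        = α τ *ᵥ ∫ s in (0:ℝ)..τ, ((α s)⁻¹ * χ s) *ᵥ w s := by
      intro τ
      rw [Ftilde]
      simp only [Matrix.neg_mulVec, intervalIntegral.integral_neg, Matrix.mulVec_neg, neg_neg]
    have hvcont : ContinuousOn (fun r => w r + Ftilde χ α w r) (Set.Icc (0:ℝ) T) := by
      have h1 : ContinuousOn (fun r => α r *ᵥ ∫ s in (0:ℝ)..r, ((α s)⁻¹ * χ s) *ᵥ w s)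
          (Set.Icc (0:ℝ) T) := hmulVec hαc hKcont
      have h2 : ContinuousOn (fun r => Ftilde χ α w r) (Set.Icc (0:ℝ) T) := by
        apply h1.congr
        intro r _
        exact hFt r
      exact hw.add h2
    have hhderiv : ∀ r ∈ Set.Icc (0:ℝ) T,
        HasDerivWithinAt (fun τ => α τ *ᵥ ∫ s in (0:ℝ)..τ, ((α s)⁻¹ * χ s) *ᵥ w s)
          (χ r *ᵥ (w r + Ftilde χ α w r)) (Set.Icc (0:ℝ) T) r := by
      intro r hr
      have h := hasDerivWithinAt_mulVec (hα r hr) (hKderiv r hr)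
      have hval : (χ r * α r) *ᵥ (∫ s in (0:ℝ)..r, ((α s)⁻¹ * χ s) *ᵥ w s)
          + α r *ᵥ (((α r)⁻¹ * χ r) *ᵥ w r)
          = χ r *ᵥ (w r + Ftilde χ α w r) := by
        rw [hFt, Matrix.mulVec_add, Matrix.mulVec_mulVec, Matrix.mulVec_mulVec,
          ← mul_assoc, Matrix.mul_nonsing_inv _ (hdet r hr), one_mul]
        abel
      rwa [hval] at h
    have hhinteg : ContinuousOn (fun r => χ r *ᵥ (w r + Ftilde χ α w r))
        (Set.Icc (0:ℝ) T) := hmulVec hχ hvcont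
    have hh := ftc2 hhderiv hhinteg ht
    simp only [intervalIntegral.integral_same, Matrix.mulVec_zero, sub_zero] at hh
    show (w t + Ftilde χ α w t) + Fchi χ (fun r => w r + Ftilde χ α w r) t = w t
    rw [Fchi, hh, hFt]
    abel
end
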